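/- Let 0 < α < 1. For every integer p ≥ 1, the absolute value of the generalized binomial coefficient satisfies |C(1−α, p)| ≤ e^((1−α)^2 + (1−α)) / p^(2−α). -/
import Mathlib

open Finset Real

-- Gamma product formula
lemma gamma_prod (α : ℝ) (hα0 : 0 < α) (hα1 : α < 1) :
    ∀ p : ℕ, 1 ≤ p → Real.Gamma ((p : ℝ) - 1 + α)
      = Real.Gamma (α - 1) * ∏ j ∈ Finset.range p, (α - 1 + j) := by
  intro p hp
  induction p with
  | zero => omega
  | succ n ih =>
    rcases Nat.eq_or_lt_of_le hp with h | h
    · simp only [← h]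
      have : ((1:ℕ):ℝ) - 1 + α = (α - 1) + 1 := by push_cast; ring
      rw [this, Real.Gamma_add_one (by linarith : α - 1 ≠ 0)]
      simp
      ring
    · have hn : 1 ≤ n := by omega
      have hne : (n : ℝ) - 1 + α ≠ 0 := by
        have h1 : (1:ℝ) ≤ n := by exact_mod_cast hn
        nlinarith
      have : ((n+1 : ℕ) : ℝ) - 1 + α = ((n:ℝ) - 1 + α) + 1 := by push_cast; ring
      rw [this, Real.Gamma_add_one hne, ih hn, Finset.prod_range_succ]
      push_cast
      ring

lemma prod_bound (β : ℝ) (hβ0 : 0 < β) (hβ1 : β < 1) :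
    ∀ p : ℕ, 1 ≤ p →
      (∏ j ∈ Finset.range p, |(j : ℝ) - β|) * (p : ℝ) ^ ((1:ℝ) + β) ≤ p.factorial := by
  intro p hp
  induction p with
  | zero => omega
  | succ n ih =>
    rcases Nat.eq_or_lt_of_le hp with h | h
    · simp only [← h]
      have : (∏ j ∈ Finset.range 1, |(j : ℝ) - β|) = β := by
        simp [abs_of_nonpos (by linarith : (0:ℝ) - β ≤ 0)]
        linarith
      rw [this]
      norm_num [Real.one_rpow]
      linarith
    · have hn : 1 ≤ n := by omega
      have hn1 : (1:ℝ) ≤ (n:ℝ) := by exact_mod_cast hn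
      have hnpos : (0:ℝ) < n := by linarith
      -- Bernoulli
      have hbern : ((1:ℝ) + 1/n) ^ β ≤ 1 + β * (1/n) :=
        rpow_one_add_le_one_add_mul_self (by linarith [one_div_nonneg.mpr hnpos.le]) hβ0.le hβ1.le
      have hsplit : ((1:ℝ) + 1/n) ^ β = ((n:ℝ)+1) ^ β / (n:ℝ) ^ β := by
        rw [← Real.div_rpow (by linarith) hnpos.le]
        congr 1
        field_simp
      have hkey : ((n:ℝ) - β) * ((n:ℝ)+1) ^ ((1:ℝ)+β) ≤ ((n:ℝ)+1) * (n:ℝ) ^ ((1:ℝ)+β) := by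
        have h1 : ((n:ℝ)+1) ^ ((1:ℝ)+β) = ((n:ℝ)+1) * ((n:ℝ)+1) ^ β := by
          rw [Real.rpow_add (by linarith), Real.rpow_one]
        have h2 : (n:ℝ) ^ ((1:ℝ)+β) = (n:ℝ) * (n:ℝ) ^ β := by
          rw [Real.rpow_add hnpos, Real.rpow_one]
        have hb' : ((n:ℝ)+1) ^ β ≤ (1 + β/n) * (n:ℝ) ^ β := by
          rw [hsplit] at hbern
          rw [div_le_iff₀ (by positivity)] at hbern
          calc ((n:ℝ)+1) ^ β ≤ (1 + β * (1/n)) * (n:ℝ) ^ β := hbern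
            _ = (1 + β/n) * (n:ℝ) ^ β := by ring
        rw [h1, h2]
        have hnb : (0:ℝ) ≤ (n:ℝ) - β := by linarith
        have : ((n:ℝ) - β) * ((n:ℝ)+1) ^ β ≤ ((n:ℝ) - β) * ((1 + β/n) * (n:ℝ) ^ β) :=
          mul_le_mul_of_nonneg_left hb' hnb
        have h3 : ((n:ℝ) - β) * ((1 + β/n) * (n:ℝ) ^ β) ≤ (n:ℝ) * (n:ℝ) ^ β := by
          have hpow : (0:ℝ) ≤ (n:ℝ) ^ β := by positivity
          have : ((n:ℝ) - β) * (1 + β/n) ≤ (n:ℝ) := by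
            have : ((n:ℝ) - β) * (1 + β/n) = n - β^2/n := by field_simp; ring
            rw [this]
            have : (0:ℝ) ≤ β^2/n := by positivity
            linarith
          nlinarith
        nlinarith
      have ihn := ih hn
      rw [Finset.prod_range_succ]
      have habs : |(n:ℝ) - β| = (n:ℝ) - β := abs_of_nonneg (by linarith)
      rw [habs]
      have hA : (0:ℝ) ≤ ∏ j ∈ Finset.range n, |(j : ℝ) - β| :=
        Finset.prod_nonneg fun j _ => abs_nonneg _
      have hcast : ((n+1 : ℕ) : ℝ) = (n:ℝ) + 1 := by push_cast; ring
      rw [hcast]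
      calc (∏ j ∈ Finset.range n, |(j : ℝ) - β|) * ((n:ℝ) - β) * ((n:ℝ)+1) ^ ((1:ℝ)+β)
          = (∏ j ∈ Finset.range n, |(j : ℝ) - β|) * (((n:ℝ) - β) * ((n:ℝ)+1) ^ ((1:ℝ)+β)) := by ring
        _ ≤ (∏ j ∈ Finset.range n, |(j : ℝ) - β|) * (((n:ℝ)+1) * (n:ℝ) ^ ((1:ℝ)+β)) :=
            mul_le_mul_of_nonneg_left hkey hA
        _ = ((n:ℝ)+1) * ((∏ j ∈ Finset.range n, |(j : ℝ) - β|) * (n:ℝ) ^ ((1:ℝ)+β)) := by ring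
        _ ≤ ((n:ℝ)+1) * n.factorial := mul_le_mul_of_nonneg_left ihn (by linarith)
        _ = ((n+1).factorial : ℝ) := by rw [Nat.factorial_succ]; push_cast; ring

/-- `|C(1-α,p)| = |Γ(p-1+α)/(Γ(α-1) p!)| ≤ e^{(1-α)²+(1-α)} / p^{2-α}`
for `0 < α < 1` and `p ≥ 1`. -/
theorem stmt_10 (α : ℝ) (hα0 : 0 < α) (hα1 : α < 1) (p : ℕ) (hp : 1 ≤ p) :
    |Real.Gamma ((p : ℝ) - 1 + α) / (Real.Gamma (α - 1) * (p.factorial : ℝ))| ≤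
      Real.exp ((1 - α) ^ 2 + (1 - α)) / (p : ℝ) ^ ((2 : ℝ) - α) := by
  have hppos : (0:ℝ) < p := by exact_mod_cast Nat.pos_of_ne_zero (by omega)
  have hΓne : Real.Gamma (α - 1) ≠ 0 := by
    apply Real.Gamma_ne_zero
    intro m
    cases m with
    | zero => simp; intro h; linarith
    | succ k =>
      have : -((k:ℝ)+1) ≤ -1 := by
        have : (0:ℝ) ≤ k := Nat.cast_nonneg k
        linarith
      push_cast
      intro h
      linarith
  rw [gamma_prod α hα0 hα1 p hp]
  rw [show Real.Gamma (α-1) * (∏ j ∈ Finset.range p, (α - 1 + j)) /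
      (Real.Gamma (α-1) * (p.factorial : ℝ))
      = (∏ j ∈ Finset.range p, (α - 1 + j)) / (p.factorial : ℝ) by
    rw [mul_div_mul_left _ _ hΓne]]
  rw [abs_div, Finset.abs_prod, Nat.abs_cast]
  have hprodeq : (∏ j ∈ Finset.range p, |α - 1 + (j:ℝ)|)
      = ∏ j ∈ Finset.range p, |(j:ℝ) - (1 - α)| :=
    Finset.prod_congr rfl fun j _ => by rw [show α - 1 + (j:ℝ) = (j:ℝ) - (1-α) by ring]
  rw [hprodeq]
  have hpb := prod_bound (1-α) (by linarith) (by linarith) p hp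
  have hfac : (0:ℝ) < p.factorial := by exact_mod_cast p.factorial_pos
  have hrp : (0:ℝ) < (p:ℝ) ^ ((2:ℝ) - α) := Real.rpow_pos_of_pos hppos _
  rw [div_le_div_iff₀ hfac hrp]
  have h2α : (2:ℝ) - α = 1 + (1-α) := by ring
  calc (∏ j ∈ Finset.range p, |(j:ℝ) - (1 - α)|) * (p:ℝ) ^ ((2:ℝ) - α)
      = (∏ j ∈ Finset.range p, |(j:ℝ) - (1 - α)|) * (p:ℝ) ^ ((1:ℝ) + (1-α)) := by
        rw [h2α]
    _ ≤ (p.factorial : ℝ) := hpb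
    _ = 1 * (p.factorial : ℝ) := by ring
    _ ≤ Real.exp ((1 - α) ^ 2 + (1 - α)) * (p.factorial : ℝ) := by
        apply mul_le_mul_of_nonneg_right _ hfac.le
        apply Real.one_le_exp
        nlinarith
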